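/- arXiv:2403.09149 — 2 statements merged into one kernel-verified Lean document; each statement's English description precedes it below -/
import Mathlib

section
/- Let (A, m) be a Noetherian local ring and F a minimal complex of finitely generated free A-modules. Suppose there is an isomorphism φ : F[-2] → F in the homotopy category K(proj A). Then there exists a minimal 2-periodic complex X of finitely generated free A-modules and an isomorphism of complexes f : X → F (an isomorphism already in C(proj A)). -/
open CategoryTheory Limits IsLocalRing

/-- A (possibly unbounded) cochain complex over a local ring is minimal if each
differential maps into `𝔪` times the target. -/
def MinimalZ (A : Type) [CommRing A] [IsLocalRing A]
    (X : CochainComplex (ModuleCat A) ℤ) : Prop :=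
  ∀ (i j : ℤ) (x : X.X i), X.d i j x ∈ (maximalIdeal A) • (⊤ : Submodule A (X.X j))

/-- A cochain complex is 2-periodic if its terms and differentials repeat with period 2. -/
def Periodic2Z (A : Type) [CommRing A] (X : CochainComplex (ModuleCat A) ℤ) : Prop :=
  ∀ n : ℤ, X.X (n + 2) = X.X n ∧ HEq (X.d (n + 2) (n + 3)) (X.d n (n + 1))

lemma mem_smul_top_map {A : Type} [CommRing A] [IsLocalRing A] {M N : ModuleCat A} (φ : M ⟶ N) {x : M}
    (hx : x ∈ maximalIdeal A • (⊤ : Submodule A M)) :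
    φ x ∈ maximalIdeal A • (⊤ : Submodule A N) := by
  have h := Submodule.map_smul'' (maximalIdeal A) (⊤ : Submodule A M) φ.hom
  have hmem : φ x ∈ Submodule.map φ.hom (maximalIdeal A • ⊤) := ⟨x, hx, rfl⟩
  rw [h] at hmem
  exact Submodule.smul_mono le_rfl le_top hmem

lemma endo_bij {A : Type} [CommRing A] [IsNoetherianRing A] [IsLocalRing A] {M : Type*} [AddCommGroup M] [Module A M]
    [Module.Finite A M] (u : M →ₗ[A] M)
    (h : ∀ x, u x - x ∈ maximalIdeal A • (⊤ : Submodule A M)) :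
    Function.Bijective u := by
  have hsur : Function.Surjective u := by
    have hle : (⊤ : Submodule A M) ≤ LinearMap.range u := by
      apply Submodule.le_of_le_smul_of_le_jacobson_bot Module.Finite.fg_top
        (IsLocalRing.maximalIdeal_le_jacobson ⊥)
      intro x _
      have hx : x = u x - (u x - x) := by abel
      rw [hx]
      exact Submodule.sub_mem _ (Submodule.mem_sup_left ⟨x, rfl⟩)
        (Submodule.mem_sup_right (h x))
    intro y
    obtain ⟨x, hx⟩ := hle (Submodule.mem_top : y ∈ ⊤)
    exact ⟨x, hx⟩
  haveI : IsNoetherian A M := isNoetherian_of_isNoetherianRing_of_finite A M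
  exact ⟨IsNoetherian.injective_of_surjective_endomorphism u hsur, hsur⟩

variable {A : Type} [CommRing A] (F : CochainComplex (ModuleCat A) ℤ)
  (φ : ∀ i : ℤ, F.X (i + -2) ≅ F.X i)

/-- one step up by 2 -/
def stepF (i : ℤ) : F.X i ≅ F.X (i + 2) :=
  F.XIsoOfEq (show i = i + 2 + -2 by omega) ≪≫ φ (i + 2)

lemma stepF_congr {a b : ℤ} (h : a = b) :
    (stepF F φ a) = F.XIsoOfEq (by rw [h]) ≪≫ stepF F φ b ≪≫ F.XIsoOfEq (by rw [h]) := by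
  subst h
  ext
  simp [HomologicalComplex.XIsoOfEq]

def upN : (k : ℕ) → (i : ℤ) → (F.X i ≅ F.X (i + 2 * k))
  | 0, i => F.XIsoOfEq (by omega)
  | (k+1), i => upN k i ≪≫ stepF F φ (i + 2 * k) ≪≫ F.XIsoOfEq (by push_cast; ring)

def TZ : (k : ℤ) → (i : ℤ) → F.X i ≅ F.X (i + 2 * k)
  | .ofNat m, i => upN F φ m i ≪≫ F.XIsoOfEq (by simp)
  | .negSucc m, i =>
      (upN F φ (m + 1) (i + 2 * Int.negSucc m) ≪≫
        F.XIsoOfEq (by rw [Int.negSucc_eq]; push_cast; ring)).symm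

lemma upN_congr (k : ℕ) {a b : ℤ} (h : a = b) :
    upN F φ k a = F.XIsoOfEq (by rw [h]) ≪≫ upN F φ k b ≪≫ F.XIsoOfEq (by rw [h]) := by
  subst h
  ext
  simp [HomologicalComplex.XIsoOfEq]

lemma upN_succ' (k : ℕ) (j : ℤ) :
    upN F φ (k + 1) j = stepF F φ j ≪≫ upN F φ k (j + 2) ≪≫
      F.XIsoOfEq (by push_cast; ring) := by
  induction k generalizing j with
  | zero =>
      ext
      simp [upN, stepF, HomologicalComplex.XIsoOfEq]
  | succ k ih =>
      show upN F φ (k + 1) j ≪≫ _ ≪≫ _ = _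
      rw [ih]
      rw [stepF_congr F φ (show j + 2 * ((k + 1 : ℕ) : ℤ) = (j + 2) + 2 * k by push_cast; ring)]
      show _ = stepF F φ j ≪≫ (upN F φ k (j+2) ≪≫ stepF F φ (j + 2 + 2 * k) ≪≫ _) ≪≫ _
      ext
      simp [HomologicalComplex.XIsoOfEq]

lemma TZ_succ (k i : ℤ) : TZ F φ (k + 1) i =
    TZ F φ k i ≪≫ stepF F φ (i + 2 * k) ≪≫ F.XIsoOfEq (by ring) := by
  cases k with
  | ofNat m =>
      show TZ F φ (Int.ofNat (m + 1)) i = _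
      ext
      simp [TZ, upN, HomologicalComplex.XIsoOfEq, stepF]
  | negSucc m =>
      cases m with
      | zero =>
          show TZ F φ (Int.ofNat 0) i = _
          ext
          simp [TZ, upN, HomologicalComplex.XIsoOfEq, stepF]
      | succ m =>
          show TZ F φ (Int.negSucc m) i = _
          simp only [TZ]
          rw [upN_succ', upN_succ']
          rw [stepF_congr F φ
            (show i + 2 * Int.negSucc m = i + 2 * Int.negSucc (m + 1) + 2 by
              simp [Int.negSucc_eq]; ring)]
          rw [upN_congr F φ m
            (show i + 2 * Int.negSucc m + 2 = i + 2 * Int.negSucc (m + 1) + 2 + 2 by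
              simp [Int.negSucc_eq]; ring)]
          rw [upN_succ']
          ext
          simp [HomologicalComplex.XIsoOfEq]

def fullI (n : ℤ) : F.X (n % 2) ≅ F.X n :=
  TZ F φ (n / 2) (n % 2) ≪≫ F.XIsoOfEq (by omega)

lemma TZ_congr {k k' : ℤ} (hk : k = k') {a b : ℤ} (h : a = b) :
    TZ F φ k a = F.XIsoOfEq (by rw [h]) ≪≫ TZ F φ k' b ≪≫ F.XIsoOfEq (by rw [h, hk]) := by
  subst h; subst hk
  ext
  simp [HomologicalComplex.XIsoOfEq]

lemma fullI_rec (n : ℤ) :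
    fullI F φ (n + 2) = F.XIsoOfEq (by omega) ≪≫ fullI F φ n ≪≫ stepF F φ n := by
  have hdiv : (n + 2) / 2 = n / 2 + 1 := by omega
  have hmod : (n + 2) % 2 = n % 2 := by omega
  rw [fullI, fullI, TZ_congr F φ hdiv hmod, TZ_succ,
    stepF_congr F φ (show n % 2 + 2 * (n / 2) = n by omega)]
  ext
  simp [HomologicalComplex.XIsoOfEq]

lemma stepF_d (hc : ∀ i j : ℤ, (φ i).hom ≫ F.d i j = F.d (i + -2) (j + -2) ≫ (φ j).hom)
    (n : ℤ) :
    (stepF F φ n).hom ≫ F.d (n + 2) (n + 1 + 2) ≫ (stepF F φ (n + 1)).inv = F.d n (n + 1) := by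
  have h := hc (n + 2) (n + 1 + 2)
  simp only [stepF, Iso.trans_hom, Iso.trans_inv, Category.assoc]
  rw [reassoc_of% h]
  simp only [Iso.hom_inv_id_assoc, HomologicalComplex.XIsoOfEq_hom_comp_d,
    HomologicalComplex.d_comp_XIsoOfEq_inv]

def XP : CochainComplex (ModuleCat A) ℤ where
  X n := F.X (n % 2)
  d i j := if h : i + 1 = j then (fullI F φ i).hom ≫ F.d i j ≫ (fullI F φ j).inv else 0
  shape i j h := dif_neg h
  d_comp_d' i j k hij hjk := by
    dsimp at hij hjk ⊢
    rw [if_pos (show i + 1 = j from hij), if_pos (show j + 1 = k from hjk)]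
    simp

lemma XP_d (n : ℤ) :
    (XP F φ).d n (n + 1) = (fullI F φ n).hom ≫ F.d n (n + 1) ≫ (fullI F φ (n + 1)).inv := by
  dsimp [XP]
  rw [if_pos rfl]

def toF : XP F φ ⟶ F where
  f n := (fullI F φ n).hom
  comm' i j hij := by
    change i + 1 = j at hij
    subst hij
    rw [XP_d]
    show (fullI F φ i).hom ≫ F.d i (i + 1) = ((fullI F φ i).hom ≫ F.d i (i + 1) ≫ (fullI F φ (i + 1)).inv) ≫ (fullI F φ (i + 1)).hom
    simp

instance : IsIso (toF F φ) := by
  haveI : ∀ n : ℤ, IsIso ((toF F φ).f n) := fun n => by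
    dsimp [toF]; exact Iso.isIso_hom (fullI F φ n)
  exact HomologicalComplex.Hom.isIso_of_components _

lemma fullI_congr {a b : ℤ} (h : a = b) :
    fullI F φ a = F.XIsoOfEq (by rw [h]) ≪≫ fullI F φ b ≪≫ F.XIsoOfEq (by rw [h]) := by
  subst h
  ext
  simp [HomologicalComplex.XIsoOfEq]

lemma XP_d_heq (hc : ∀ i j : ℤ, (φ i).hom ≫ F.d i j = F.d (i + -2) (j + -2) ≫ (φ j).hom)
    (n : ℤ) :
    HEq ((XP F φ).d (n + 2) (n + 3)) ((XP F φ).d n (n + 1)) := by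
  rw [← conj_eqToHom_iff_heq' ((XP F φ).d (n + 2) (n + 3)) ((XP F φ).d n (n + 1))
    (show (XP F φ).X (n + 2) = (XP F φ).X n by
      show F.X ((n + 2) % 2) = F.X (n % 2); rw [show (n + 2) % 2 = n % 2 by omega])
    (show (XP F φ).X (n + 1) = (XP F φ).X (n + 3) by
      show F.X ((n + 1) % 2) = F.X ((n + 3) % 2); rw [show (n + 3) % 2 = (n + 1) % 2 by omega])]
  have hd : (XP F φ).d (n + 2) (n + 3) =
      (fullI F φ (n + 2)).hom ≫ F.d (n + 2) (n + 3) ≫ (fullI F φ (n + 3)).inv := by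
    dsimp [XP]
    rw [if_pos (show n + 2 + 1 = n + 3 by omega)]
  rw [hd, XP_d, fullI_rec F φ n, fullI_congr F φ (show n + 3 = n + 1 + 2 by omega),
    fullI_rec F φ (n + 1)]
  have hmid : (stepF F φ n).hom ≫ F.d (n + 2) (n + 3) ≫
      (F.XIsoOfEq (show n + 1 + 2 = n + 3 by omega)).inv ≫ (stepF F φ (n + 1)).inv =
      F.d n (n + 1) := by
    slice_lhs 2 3 => rw [HomologicalComplex.d_comp_XIsoOfEq_inv]
    exact stepF_d F φ hc n
  simp only [Iso.trans_hom, Iso.trans_inv, Category.assoc]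
  rw [reassoc_of% hmid]
  simp [HomologicalComplex.XIsoOfEq, eqToHom_trans]
  rfl

/-- if `F` is a minimal complex of finitely generated free modules over a
Noetherian local ring which is isomorphic to its shift `F[-2]` in the homotopy category,
then `F` is isomorphic, as a complex, to a minimal 2-periodic complex of finitely
generated free modules. -/
theorem stmt_10 (A : Type) [CommRing A] [IsNoetherianRing A] [IsLocalRing A]
    (F : CochainComplex (ModuleCat A) ℤ)
    (hfree : ∀ i, Module.Free A (F.X i) ∧ Module.Finite A (F.X i))
    (hmin : MinimalZ A F)
    (hiso : Nonempty
      (((HomotopyCategory.quotient (ModuleCat A) (ComplexShape.up ℤ)).obj (F⟦(-2 : ℤ)⟧)) ≅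
        (HomotopyCategory.quotient (ModuleCat A) (ComplexShape.up ℤ)).obj F)) :
    ∃ X : CochainComplex (ModuleCat A) ℤ,
      Periodic2Z A X ∧ MinimalZ A X ∧
      (∀ i, Module.Free A (X.X i) ∧ Module.Finite A (X.X i)) ∧
      ∃ f : X ⟶ F, IsIso f := by
  obtain ⟨e⟩ := hiso
  set Q := HomotopyCategory.quotient (ModuleCat A) (ComplexShape.up ℤ) with hQ
  let f0 : F⟦(-2 : ℤ)⟧ ⟶ F := Q.preimage e.hom
  let g0 : F ⟶ F⟦(-2 : ℤ)⟧ := Q.preimage e.inv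
  have hfg : Homotopy (f0 ≫ g0) (𝟙 _) :=
    HomotopyCategory.homotopyOfEq _ _ (by
      rw [Functor.map_comp, Functor.map_preimage, Functor.map_preimage, e.hom_inv_id]
      exact (CategoryTheory.Functor.map_id _ _).symm)
  have hgf : Homotopy (g0 ≫ f0) (𝟙 _) :=
    HomotopyCategory.homotopyOfEq _ _ (by
      rw [Functor.map_comp, Functor.map_preimage, Functor.map_preimage, e.inv_hom_id]
      exact (CategoryTheory.Functor.map_id _ _).symm)
  -- minimality of the shifted complex
  have hdshift : ∀ i j : ℤ, (F⟦(-2 : ℤ)⟧).d i j = F.d (i + -2) (j + -2) := by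
    intro i j
    rw [CochainComplex.shiftFunctor_obj_d', Int.negOnePow_even _ ⟨-1, by ring⟩, one_smul]
  have hminS : ∀ (i j : ℤ) (x : (F⟦(-2 : ℤ)⟧).X i),
      (F⟦(-2 : ℤ)⟧).d i j x ∈ maximalIdeal A • (⊤ : Submodule A ((F⟦(-2 : ℤ)⟧).X j)) := by
    intro i j x
    rw [hdshift i j]
    exact hmin _ _ x
  -- homotopies give "identity mod m" endomorphisms
  have key : ∀ (C : CochainComplex (ModuleCat A) ℤ)
      (hminC : ∀ (i j : ℤ) (x : C.X i), C.d i j x ∈ maximalIdeal A • (⊤ : Submodule A (C.X j)))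
      (u : C ⟶ C) (H : Homotopy u (𝟙 C)) (i : ℤ) (x : C.X i),
      u.f i x - x ∈ maximalIdeal A • (⊤ : Submodule A (C.X i)) := by
    intro C hminC u H i x
    have hcomm := H.comm i
    rw [dNext_eq H.hom (show (ComplexShape.up ℤ).Rel i (i + 1) by simp),
      prevD_eq H.hom (show (ComplexShape.up ℤ).Rel (i - 1) i by simp)] at hcomm
    have : u.f i x = (H.hom (i + 1) i) (C.d i (i + 1) x) + (C.d (i - 1) i) (H.hom i (i - 1) x)
        + x := by
      rw [hcomm]
      rfl
    rw [this]
    have h1 : (H.hom (i + 1) i) (C.d i (i + 1) x) ∈ maximalIdeal A • (⊤ : Submodule A (C.X i)) :=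
      mem_smul_top_map _ (hminC i (i + 1) x)
    have h2 : (C.d (i - 1) i) (H.hom i (i - 1) x) ∈ maximalIdeal A • (⊤ : Submodule A (C.X i)) :=
      hminC _ _ _
    have : (H.hom (i + 1) i) (C.d i (i + 1) x) + (C.d (i - 1) i) (H.hom i (i - 1) x) + x - x
        = (H.hom (i + 1) i) (C.d i (i + 1) x) + (C.d (i - 1) i) (H.hom i (i - 1) x) := by abel
    rw [this]
    exact Submodule.add_mem _ h1 h2
  -- componentwise bijectivity
  have hbij : ∀ i : ℤ, Function.Bijective (f0.f i) := by
    intro i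
    haveI : Module.Finite A (F.X (i + -2)) := (hfree _).2
    haveI : Module.Finite A (F.X i) := (hfree _).2
    have hu : Function.Bijective ((f0 ≫ g0).f i) := by
      haveI : Module.Finite A ((F⟦(-2 : ℤ)⟧).X i) := (hfree (i + -2)).2
      exact endo_bij (M := ↥((F⟦(-2 : ℤ)⟧).X i)) ((f0 ≫ g0).f i).hom (key _ hminS _ hfg i)
    have hv : Function.Bijective ((g0 ≫ f0).f i) := by
      have hminF : ∀ (a b : ℤ) (x : F.X a),
          F.d a b x ∈ maximalIdeal A • (⊤ : Submodule A (F.X b)) := hmin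
      exact endo_bij (M := ↥(F.X i)) ((g0 ≫ f0).f i).hom (key _ hminF _ hgf i)
    constructor
    · intro a b hab
      apply hu.1
      show g0.f i (f0.f i a) = g0.f i (f0.f i b)
      rw [hab]
    · intro y
      obtain ⟨x, hx⟩ := hv.2 y
      exact ⟨g0.f i x, hx⟩
  have hIso : ∀ i : ℤ, IsIso (f0.f i) := fun i =>
    (ConcreteCategory.isIso_iff_bijective _).mpr (hbij i)
  let φ : ∀ i : ℤ, F.X (i + -2) ≅ F.X i := fun i =>
    show F.X (i + -2) ≅ F.X i from @asIso _ _ _ _ _ (hIso i)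
  have hc : ∀ i j : ℤ, (φ i).hom ≫ F.d i j = F.d (i + -2) (j + -2) ≫ (φ j).hom := by
    intro i j
    have := f0.comm i j
    rw [hdshift i j] at this
    exact this
  refine ⟨XP F φ, ?_, ?_, ?_, ⟨toF F φ, inferInstance⟩⟩
  · intro n
    refine ⟨?_, XP_d_heq F φ hc n⟩
    show F.X ((n + 2) % 2) = F.X (n % 2)
    rw [show (n + 2) % 2 = n % 2 by omega]
  · intro i j x
    show (if i + 1 = j then (fullI F φ i).hom ≫ F.d i j ≫ (fullI F φ j).inv else 0) x ∈ _
    by_cases h : i + 1 = j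
    · rw [if_pos h]
      exact mem_smul_top_map ((fullI F φ j).inv) (hmin i j ((fullI F φ i).hom x))
    · rw [if_neg h]
      exact Submodule.zero_mem _
  · intro i
    exact hfree (i % 2)
end

section
/- Let A be a DVR with uniformizer x and K(1) the 2-periodic complex with all terms A, odd differentials multiplication by x, even differentials zero. Then every 2-periodic chain map f : K(1) → K(1) is, up to 2-periodic homotopy, either null-homotopic or an isomorphism; in particular End of K(1) in the 2-periodic homotopy category is a division ring and there are no irreducible maps from K(1) to itself. -/
open CategoryTheory Limits IsLocalRing

/-- The complex shape of 2-periodic cochain complexes. -/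
abbrev c2 : ComplexShape (ZMod 2) := ComplexShape.up (ZMod 2)

/-- `elem A e a` is the 2-periodic complex with all terms `A`, whose differential from
degree `e` to degree `e + 1` is multiplication by `a`, and whose other differential is `0`. -/
def elem (A : Type) [CommRing A] (e : ZMod 2) (a : A) :
    HomologicalComplex (ModuleCat A) c2 where
  X _ := ModuleCat.of A A
  d i j := if i = e ∧ j = e + 1 then a • 𝟙 (ModuleCat.of A A) else 0
  shape i j h := by
    simp only [ComplexShape.up_Rel] at h
    rw [if_neg]; rintro ⟨rfl, rfl⟩; exact h rfl
  d_comp_d' i j k hij hjk := by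
    simp only [ComplexShape.up_Rel] at hij hjk
    by_cases h : i = e ∧ j = e + 1
    · rw [if_neg (show ¬(j = e ∧ k = e + 1) by
        rintro ⟨rfl, -⟩; exact one_ne_zero (left_eq_add.mp h.2))]
      simp
    · rw [if_neg h]; simp

/-- A morphism in a category is irreducible if it is neither a section nor a retraction,
and in any factorization `f = g ≫ h`, either `g` is a section or `h` is a retraction. -/
def IsIrreducibleHom {C : Type*} [Category C] {X Y : C} (f : X ⟶ Y) : Prop :=
  (¬ ∃ r : Y ⟶ X, f ≫ r = 𝟙 X) ∧ (¬ ∃ s : Y ⟶ X, s ≫ f = 𝟙 Y) ∧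
    ∀ ⦃U : C⦄ (g : X ⟶ U) (h : U ⟶ Y), g ≫ h = f →
      (∃ r : U ⟶ X, g ≫ r = 𝟙 X) ∨ (∃ s : Y ⟶ U, s ≫ h = 𝟙 Y)

section Aux

variable {A : Type} [CommRing A]

lemma hom_eq_smul (φ : ModuleCat.of A A ⟶ ModuleCat.of A A) :
    ∃ a : A, φ = a • 𝟙 (ModuleCat.of A A) :=
  ⟨φ.hom (1:A), ModuleCat.hom_ext (LinearMap.ext_ring (by simp))⟩

lemma smul_id_comp_smul_id (c d : A) :
    (c • 𝟙 (ModuleCat.of A A)) ≫ (d • 𝟙 (ModuleCat.of A A)) = (c*d) • 𝟙 (ModuleCat.of A A) := by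
  rw [Linear.comp_smul, Linear.smul_comp, Category.comp_id, smul_smul, mul_comm]

lemma smul_id_inj {c d : A} (h : c • 𝟙 (ModuleCat.of A A) = d • 𝟙 (ModuleCat.of A A)) :
    c = d := by
  have h1 : c * (1:A) = d * 1 := by
    have := congrArg (fun φ => φ.hom (1:A)) h
    simpa using this
  simpa using h1

lemma elem_d_one_zero (x : A) : (elem A 1 x).d 1 0 = x • 𝟙 (ModuleCat.of A A) := by
  show (if (1 : ZMod 2) = 1 ∧ (0 : ZMod 2) = 1 + 1 then x • 𝟙 (ModuleCat.of A A) else 0) = _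
  rw [if_pos (by decide)]

lemma elem_d_zero_one (x : A) : (elem A 1 x).d 0 1 = 0 := by
  show (if (0 : ZMod 2) = 1 ∧ (1 : ZMod 2) = 1 + 1 then x • 𝟙 (ModuleCat.of A A) else 0) = _
  rw [if_neg (by decide)]
  rfl

/-- The chain map on `elem A 1 x` which is multiplication by `c` in every degree. -/
def smulHom (x : A) (c : A) : elem A 1 x ⟶ elem A 1 x where
  f _ := c • 𝟙 (ModuleCat.of A A)
  comm' i j _ := by
    dsimp only [elem]
    rw [Linear.smul_comp, Linear.comp_smul, Category.id_comp, Category.comp_id]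

end Aux

/-- over a DVR with uniformizer `x`, every 2-periodic endomorphism of
`K(1)` is either 2-periodically null-homotopic or an isomorphism; consequently the
endomorphism ring of `K(1)` in `K²(proj A)` is a division ring, and there is no
irreducible map from `K(1)` to itself in `K²(proj A)`. -/
theorem stmt_17 (A : Type) [CommRing A] [IsDomain A] [IsDiscreteValuationRing A]
    (x : A) (hx : Irreducible x) :
    (∀ f : elem A 1 x ⟶ elem A 1 x, Nonempty (Homotopy f 0) ∨ IsIso f) ∧
    (∀ g : End ((HomotopyCategory.quotient (ModuleCat A) c2).obj (elem A 1 x)),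
      g = 0 ∨ IsUnit g) ∧
    ¬ ∃ f : (HomotopyCategory.quotient (ModuleCat A) c2).obj (elem A 1 x) ⟶
        (HomotopyCategory.quotient (ModuleCat A) c2).obj (elem A 1 x),
      IsIrreducibleHom f := by
  have hzmod : ∀ i : ZMod 2, i = 0 ∨ i = 1 := by decide
  have part1 : ∀ f : elem A 1 x ⟶ elem A 1 x, Nonempty (Homotopy f 0) ∨ IsIso f := by
    intro f
    obtain ⟨a0, h0⟩ := hom_eq_smul (f.f 0)
    obtain ⟨a1, h1⟩ := hom_eq_smul (f.f 1)
    have hcomm := f.comm' 1 0 (by decide)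
    rw [h0, h1, elem_d_one_zero] at hcomm
    replace hcomm : (a1 * x) • 𝟙 (ModuleCat.of A A) = (x * a0) • 𝟙 (ModuleCat.of A A) := by
      rw [← smul_id_comp_smul_id, ← smul_id_comp_smul_id]; exact hcomm
    have ha : a1 = a0 := by
      have h2 := smul_id_inj hcomm
      rw [mul_comm a1 x] at h2
      exact mul_left_cancel₀ hx.ne_zero h2
    subst ha
    by_cases hu : IsUnit a1
    · right
      refine ⟨⟨smulHom x (↑hu.unit⁻¹ : A), ?_, ?_⟩⟩
      · ext n
        rcases hzmod n with rfl | rfl <;>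
          · simp only [HomologicalComplex.comp_f, HomologicalComplex.id_f, h0, h1, smulHom,
              smul_id_comp_smul_id]
            change ((a1 • 𝟙 (ModuleCat.of A A)) ≫ ((↑hu.unit⁻¹ : A) • 𝟙 (ModuleCat.of A A))).hom (1:A) = ModuleCat.Hom.hom (𝟙 (ModuleCat.of A A)) (1:A)
            rw [smul_id_comp_smul_id, IsUnit.mul_val_inv, one_smul]
      · ext n
        rcases hzmod n with rfl | rfl <;>
          · simp only [HomologicalComplex.comp_f, HomologicalComplex.id_f, h0, h1, smulHom,
              smul_id_comp_smul_id]
            change (((↑hu.unit⁻¹ : A) • 𝟙 (ModuleCat.of A A)) ≫ (a1 • 𝟙 (ModuleCat.of A A))).hom (1:A) = ModuleCat.Hom.hom (𝟙 (ModuleCat.of A A)) (1:A)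
            rw [smul_id_comp_smul_id, IsUnit.val_inv_mul, one_smul]
    · left
      have hmem : a1 ∈ maximalIdeal A := hu
      rw [hx.maximalIdeal_eq, Ideal.mem_span_singleton] at hmem
      obtain ⟨c, hc⟩ := hmem
      refine ⟨⟨fun i j => (if j = i + 1 then c • 𝟙 (ModuleCat.of A A) else 0),
        fun i j h => ?_, fun i => ?_⟩⟩
      · refine if_neg ?_
        intro hji
        refine h ?_
        show j + 1 = i
        rw [hji, add_assoc]
        rw [show (1 + 1 : ZMod 2) = 0 by decide, add_zero]
      · rcases hzmod i with rfl | rfl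
        · rw [dNext_eq _ (show c2.Rel 0 1 by decide), prevD_eq _ (show c2.Rel 1 0 by decide)]
          change (f.f 0 : ModuleCat.of A A ⟶ ModuleCat.of A A) = ((elem A 1 x).d 0 1 ≫ (c • 𝟙 (ModuleCat.of A A)) : ModuleCat.of A A ⟶ ModuleCat.of A A) + ((c • 𝟙 (ModuleCat.of A A)) ≫ (elem A 1 x).d 1 0 : ModuleCat.of A A ⟶ ModuleCat.of A A) + (0 : ModuleCat.of A A ⟶ ModuleCat.of A A)
          rw [elem_d_zero_one, elem_d_one_zero, h0]
          change a1 • 𝟙 (ModuleCat.of A A) = (0 : ModuleCat.of A A ⟶ ModuleCat.of A A) ≫ (c • 𝟙 (ModuleCat.of A A)) + (c • 𝟙 (ModuleCat.of A A)) ≫ (x • 𝟙 (ModuleCat.of A A)) + (0 : ModuleCat.of A A ⟶ ModuleCat.of A A)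
          rw [zero_comp, zero_add, smul_id_comp_smul_id, mul_comm, ← hc]
          simp
        · rw [dNext_eq _ (show c2.Rel 1 0 by decide), prevD_eq _ (show c2.Rel 0 1 by decide)]
          change (f.f 1 : ModuleCat.of A A ⟶ ModuleCat.of A A) = ((elem A 1 x).d 1 0 ≫ (c • 𝟙 (ModuleCat.of A A)) : ModuleCat.of A A ⟶ ModuleCat.of A A) + ((c • 𝟙 (ModuleCat.of A A)) ≫ (elem A 1 x).d 0 1 : ModuleCat.of A A ⟶ ModuleCat.of A A) + (0 : ModuleCat.of A A ⟶ ModuleCat.of A A)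
          rw [elem_d_zero_one, elem_d_one_zero, h1]
          change a1 • 𝟙 (ModuleCat.of A A) = (x • 𝟙 (ModuleCat.of A A)) ≫ (c • 𝟙 (ModuleCat.of A A)) + (c • 𝟙 (ModuleCat.of A A)) ≫ (0 : ModuleCat.of A A ⟶ ModuleCat.of A A) + (0 : ModuleCat.of A A ⟶ ModuleCat.of A A)
          rw [comp_zero, add_zero, smul_id_comp_smul_id, ← hc]
          simp
  have part2 : ∀ g : End ((HomotopyCategory.quotient (ModuleCat A) c2).obj (elem A 1 x)),
      g = 0 ∨ IsUnit g := by
    intro g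
    obtain ⟨f, hf⟩ := (HomotopyCategory.quotient (ModuleCat A) c2).map_surjective g
    rcases part1 f with hH | hiso
    · left
      obtain ⟨H⟩ := hH
      rw [← hf, HomotopyCategory.eq_of_homotopy f 0 H, Functor.map_zero]
    · right
      have : IsIso g := by rw [← hf]; infer_instance
      exact ⟨⟨g, inv g, IsIso.inv_hom_id g, IsIso.hom_inv_id g⟩, rfl⟩
  refine ⟨part1, part2, ?_⟩
  rintro ⟨f, hf1, hf2, hf3⟩
  rcases part2 f with hf0 | hfu
  · have hcomp : f ≫ f = f := by rw [hf0]; exact zero_comp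
    exact (hf3 f f hcomp).elim hf1 hf2
  · exact hf1 ⟨((hfu.unit⁻¹ : (End _)ˣ) : End _), hfu.unit.inv_mul_of_eq hfu.unit_spec⟩
end
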